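/- Let k and n be integers with n > k ≥ 1, let N = 2^n + 2^k + 1, and assume 3 divides 2^{n-k} + 1 (equivalently 3 divides N - 1). Then there exists an n-element set A of positive integers that is sumset-distinct modulo N and satisfies max A ≤ N/3 + N/2^k. -/

import Mathlib

/-- An `n`-element set `A` of positive integers is *sumset-distinct modulo `N`*
if all subset sums (including the empty sum) are pairwise distinct modulo `N`. -/
def SumsetDistinctMod (N : ℕ) (A : Finset ℕ) : Prop :=
  ∀ B ⊆ A, ∀ C ⊆ A, (∑ x ∈ B, x) % N = (∑ x ∈ C, x) % N → B = C

open Finset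

private lemma geoZ : ∀ t : ℕ, ∑ j ∈ range t, (2:ℤ)^j = 2^t - 1 := by
  intro t
  induction t with
  | zero => simp
  | succ t ih => rw [Finset.sum_range_succ, ih]; ring

private lemma sum_two_pow_lt (t : ℕ) (S : Finset ℕ) (hS : S ⊆ range t) :
    (∑ i ∈ S, (2:ℤ) ^ i) < 2 ^ t := by
  have h1 : (∑ i ∈ S, (2:ℤ)^i) ≤ ∑ i ∈ range t, (2:ℤ)^i :=
    Finset.sum_le_sum_of_subset_of_nonneg hS (by intros; positivity)
  rw [geoZ] at h1
  linarith

private lemma sum_two_pow_nonneg (S : Finset ℕ) : (0:ℤ) ≤ ∑ i ∈ S, (2:ℤ) ^ i :=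
  Finset.sum_nonneg (by intros; positivity)

private lemma two_pow_sum_inj : ∀ (t : ℕ) (S S' : Finset ℕ), S ⊆ range t → S' ⊆ range t →
    (∑ i ∈ S, (2:ℤ) ^ i) = ∑ i ∈ S', (2:ℤ) ^ i → S = S' := by
  intro t
  induction t with
  | zero =>
      intro S S' hS hS' _
      rw [range_zero, Finset.subset_empty] at hS hS'
      rw [hS, hS']
  | succ t ih =>
      intro S S' hS hS' h
      have key : ∀ X : Finset ℕ, X ⊆ range (t+1) → t ∉ X → X ⊆ range t := by
        intro X hX htX i hi
        have h1 := Finset.mem_range.mp (hX hi)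
        have h2 : i ≠ t := fun he => htX (he ▸ hi)
        exact Finset.mem_range.mpr (by omega)
      have erasesub : ∀ X : Finset ℕ, X ⊆ range (t+1) → X.erase t ⊆ range t := by
        intro X hX i hi
        have h1 := Finset.mem_of_mem_erase hi
        have h2 := Finset.ne_of_mem_erase hi
        have := Finset.mem_range.mp (hX h1)
        exact Finset.mem_range.mpr (by omega)
      by_cases h1 : t ∈ S <;> by_cases h2 : t ∈ S'
      · have e1 : (2:ℤ)^t + ∑ i ∈ S.erase t, (2:ℤ)^i = ∑ i ∈ S, (2:ℤ)^i :=
          Finset.add_sum_erase _ _ h1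
        have e2 : (2:ℤ)^t + ∑ i ∈ S'.erase t, (2:ℤ)^i = ∑ i ∈ S', (2:ℤ)^i :=
          Finset.add_sum_erase _ _ h2
        have he : S.erase t = S'.erase t := by
          apply ih _ _ (erasesub S hS) (erasesub S' hS')
          linarith [e1, e2, h]
        have : insert t (S.erase t) = insert t (S'.erase t) := by rw [he]
        rwa [Finset.insert_erase h1, Finset.insert_erase h2] at this
      · exfalso
        have e1 : (2:ℤ)^t + ∑ i ∈ S.erase t, (2:ℤ)^i = ∑ i ∈ S, (2:ℤ)^i :=
          Finset.add_sum_erase _ _ h1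
        have b1 := sum_two_pow_nonneg (S.erase t)
        have b2 := sum_two_pow_lt t S' (key S' hS' h2)
        linarith
      · exfalso
        have e1 : (2:ℤ)^t + ∑ i ∈ S'.erase t, (2:ℤ)^i = ∑ i ∈ S', (2:ℤ)^i :=
          Finset.add_sum_erase _ _ h2
        have b1 := sum_two_pow_nonneg (S'.erase t)
        have b2 := sum_two_pow_lt t S (key S hS h1)
        linarith
      · exact ih S S' (key S hS h1) (key S' hS' h2) h

private lemma pow2_mod3 (j : ℕ) : 2^j % 3 = if j % 2 = 0 then 1 else 2 := by
  induction j with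
  | zero => simp
  | succ j ih =>
      have hp : (2:ℕ)^(j+1) = 2 * 2^j := by ring
      by_cases h : j % 2 = 0
      · rw [if_pos h] at ih
        rw [if_neg (by omega : ¬ (j+1) % 2 = 0), hp]
        omega
      · rw [if_neg h] at ih
        rw [if_pos (by omega : (j+1) % 2 = 0), hp]
        omega

/-- The element function: for `i < k` it is `2^i (2^m+1)/3`; for `i = k+j` it is
`(N - 2^j)/3` for even `j` and `(N + 2^j)/3` for odd `j`. -/
private def selt (N k m i : ℕ) : ℕ :=
  if i < k then 2 ^ i * (2 ^ m + 1) / 3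
  else if (i - k) % 2 = 0 then (N - 2 ^ (i - k)) / 3 else (N + 2 ^ (i - k)) / 3

section facts

variable {k m N : ℕ}

private lemma hN3 (hN : N = 2^(k+m) + 2^k + 1) (h3 : 3 ∣ 2^m + 1) : N % 3 = 1 := by
  obtain ⟨e, he⟩ := h3
  have h2 : 2^(k+m) + 2^k = 3 * (e * 2^k) := by
    rw [pow_add]
    calc 2^k * 2^m + 2^k = 2^k * (2^m + 1) := by ring
    _ = 2^k * (3 * e) := by rw [he]
    _ = 3 * (e * 2^k) := by ring
  omega

private lemma selt_lo (h3 : 3 ∣ 2^m + 1) (i : ℕ) (hik : i < k) :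
    3 * selt N k m i = 2^i * (2^m + 1) := by
  rw [selt, if_pos hik]
  exact Nat.mul_div_cancel' (Dvd.dvd.mul_left h3 _)

private lemma selt_he (hN : N = 2^(k+m) + 2^k + 1) (h3 : 3 ∣ 2^m + 1) (i : ℕ)
    (hki : ¬ i < k) (him : i < k + m) (hpar : (i - k) % 2 = 0) :
    3 * selt N k m i = N - 2^(i-k) ∧ 2^(i-k) ≤ N := by
  have hjm : i - k < m := by omega
  have hle : 2^(i-k) ≤ N := by
    rw [hN]
    have h1 : (2:ℕ)^(i-k) ≤ 2^(k+m) := Nat.pow_le_pow_right (by norm_num) (by omega)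
    exact le_trans h1 (le_trans (Nat.le_add_right _ _) (Nat.le_add_right _ _))
  have hmod : 2^(i-k) % 3 = 1 := by rw [pow2_mod3, if_pos hpar]
  have hNm := hN3 hN h3
  have hdvd : 3 ∣ N - 2^(i-k) := by omega
  constructor
  · rw [selt, if_neg hki, if_pos hpar]
    exact Nat.mul_div_cancel' hdvd
  · exact hle

private lemma selt_ho (hN : N = 2^(k+m) + 2^k + 1) (h3 : 3 ∣ 2^m + 1) (i : ℕ)
    (hki : ¬ i < k) (him : i < k + m) (hpar : ¬ (i - k) % 2 = 0) :
    3 * selt N k m i = N + 2^(i-k) := by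
  have hmod : 2^(i-k) % 3 = 2 := by rw [pow2_mod3, if_neg hpar]
  have hNm := hN3 hN h3
  have hdvd : 3 ∣ N + 2^(i-k) := by omega
  rw [selt, if_neg hki, if_neg hpar]
  exact Nat.mul_div_cancel' hdvd

end facts

/- decompositions of an index set -/
private def slo (k : ℕ) (X : Finset ℕ) : Finset ℕ := X.filter (fun i => i < k)
private def she (k : ℕ) (X : Finset ℕ) : Finset ℕ :=
  X.filter (fun i => ¬ i < k ∧ (i - k) % 2 = 0)
private def sho (k : ℕ) (X : Finset ℕ) : Finset ℕ :=
  X.filter (fun i => ¬ i < k ∧ ¬ (i - k) % 2 = 0)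

private def usum (k : ℕ) (X : Finset ℕ) : ℤ := ∑ i ∈ slo k X, 2^i
private def psum (k : ℕ) (X : Finset ℕ) : ℤ := ∑ i ∈ sho k X, 2^(i-k)
private def qsum (k : ℕ) (X : Finset ℕ) : ℤ := ∑ i ∈ she k X, 2^(i-k)

private lemma sum_split (k : ℕ) (X : Finset ℕ) (f : ℕ → ℤ) :
    ∑ i ∈ X, f i = (∑ i ∈ slo k X, f i) + (∑ i ∈ she k X, f i) + (∑ i ∈ sho k X, f i) := by
  classical
  rw [← Finset.sum_filter_add_sum_filter_not X (fun i => i < k) f]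
  have h2 : ∑ i ∈ X.filter (fun i => ¬ i < k), f i
      = (∑ i ∈ she k X, f i) + (∑ i ∈ sho k X, f i) := by
    rw [← Finset.sum_filter_add_sum_filter_not (X.filter (fun i => ¬ i < k))
      (fun i => (i - k) % 2 = 0) f]
    rw [Finset.filter_filter, Finset.filter_filter]
    rfl
  rw [h2, slo]
  ring

private lemma stepA (k m N : ℕ) (hN : N = 2^(k+m) + 2^k + 1) (h3 : 3 ∣ 2^m + 1)
    (X : Finset ℕ) (hX : X ⊆ range (k+m)) :
    3 * (∑ i ∈ X, (selt N k m i : ℤ)) =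
      (((she k X).card + (sho k X).card : ℤ)) * N
        + ((2^m+1) * usum k X + psum k X - qsum k X) := by
  have hmem : ∀ i ∈ X, i < k + m := fun i hi => Finset.mem_range.mp (hX hi)
  rw [Finset.mul_sum, sum_split k X (fun i => 3 * (selt N k m i : ℤ))]
  have hlo : ∑ i ∈ slo k X, 3 * (selt N k m i : ℤ) = (2^m+1) * usum k X := by
    rw [usum, Finset.mul_sum]
    apply Finset.sum_congr rfl
    intro i hi
    have hik : i < k := (Finset.mem_filter.mp hi).2
    have h := selt_lo (N := N) h3 i hik
    have h2 : (3:ℤ) * (selt N k m i : ℤ) = 2^i * (2^m + 1) := by exact_mod_cast congrArg (Nat.cast : ℕ → ℤ) h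
    rw [h2]; ring
  have hhe : ∑ i ∈ she k X, 3 * (selt N k m i : ℤ) = ((she k X).card : ℤ) * N - qsum k X := by
    have hpt : ∀ i ∈ she k X, (3:ℤ) * (selt N k m i : ℤ) = (N:ℤ) - 2^(i-k) := by
      intro i hi
      have hmf := Finset.mem_filter.mp hi
      obtain ⟨h1, h2⟩ := selt_he hN h3 i hmf.2.1 (hmem i hmf.1) hmf.2.2
      have h3' := congrArg (Nat.cast : ℕ → ℤ) h1
      push_cast [h2] at h3'
      push_cast
      linarith
    rw [Finset.sum_congr rfl hpt, Finset.sum_sub_distrib, Finset.sum_const, qsum]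
    simp [nsmul_eq_mul]
  have hho : ∑ i ∈ sho k X, 3 * (selt N k m i : ℤ) = ((sho k X).card : ℤ) * N + psum k X := by
    have hpt : ∀ i ∈ sho k X, (3:ℤ) * (selt N k m i : ℤ) = (N:ℤ) + 2^(i-k) := by
      intro i hi
      have hmf := Finset.mem_filter.mp hi
      have h1 := selt_ho hN h3 i hmf.2.1 (hmem i hmf.1) hmf.2.2
      have h3' := congrArg (Nat.cast : ℕ → ℤ) h1
      push_cast at h3'
      push_cast
      linarith
    rw [Finset.sum_congr rfl hpt, Finset.sum_add_distrib, Finset.sum_const, psum]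
    simp [nsmul_eq_mul]
  rw [hlo, hhe, hho]
  ring

private lemma usum_bounds (k : ℕ) (X : Finset ℕ) : 0 ≤ usum k X ∧ usum k X ≤ 2^k - 1 := by
  refine ⟨sum_two_pow_nonneg _, ?_⟩
  have h := sum_two_pow_lt k (slo k X)
    (fun i hi => Finset.mem_range.mpr (Finset.mem_filter.mp hi).2)
  rw [usum]
  linarith

private def wodd (k : ℕ) (X : Finset ℕ) : Finset ℕ := (sho k X).image (· - k)
private def weven (k : ℕ) (X : Finset ℕ) : Finset ℕ := (she k X).image (· - k)

private def esum (m : ℕ) : ℤ := ∑ j ∈ (range m).filter (fun j => j % 2 = 0), (2:ℤ)^j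
private def osum (m : ℕ) : ℤ := ∑ j ∈ (range m).filter (fun j => ¬ j % 2 = 0), (2:ℤ)^j

private lemma eo_sum (m : ℕ) : esum m + osum m = 2^m - 1 := by
  rw [esum, osum, Finset.sum_filter_add_sum_filter_not, geoZ]

private lemma qsum_eq (k : ℕ) (X : Finset ℕ) : qsum k X = ∑ j ∈ weven k X, (2:ℤ)^j := by
  rw [weven, Finset.sum_image, qsum]
  intro i hi j hj hij
  have h1 := (Finset.mem_filter.mp hi).2.1
  have h2 := (Finset.mem_filter.mp hj).2.1
  simp only at hij
  omega

private lemma psum_eq (k : ℕ) (X : Finset ℕ) : psum k X = ∑ j ∈ wodd k X, (2:ℤ)^j := by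
  rw [wodd, Finset.sum_image, psum]
  intro i hi j hj hij
  have h1 := (Finset.mem_filter.mp hi).2.1
  have h2 := (Finset.mem_filter.mp hj).2.1
  simp only at hij
  omega

private lemma weven_sub {k m : ℕ} {X : Finset ℕ} (hX : X ⊆ range (k+m)) :
    weven k X ⊆ (range m).filter (fun j => j % 2 = 0) := by
  intro j hj
  obtain ⟨i, hi, rfl⟩ := Finset.mem_image.mp hj
  have hmf := Finset.mem_filter.mp hi
  have him := Finset.mem_range.mp (hX hmf.1)
  exact Finset.mem_filter.mpr ⟨Finset.mem_range.mpr (by omega), hmf.2.2⟩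

private lemma wodd_sub {k m : ℕ} {X : Finset ℕ} (hX : X ⊆ range (k+m)) :
    wodd k X ⊆ (range m).filter (fun j => ¬ j % 2 = 0) := by
  intro j hj
  obtain ⟨i, hi, rfl⟩ := Finset.mem_image.mp hj
  have hmf := Finset.mem_filter.mp hi
  have him := Finset.mem_range.mp (hX hmf.1)
  exact Finset.mem_filter.mpr ⟨Finset.mem_range.mpr (by omega), hmf.2.2⟩

private lemma qsum_bounds {k m : ℕ} {X : Finset ℕ} (hX : X ⊆ range (k+m)) :
    0 ≤ qsum k X ∧ qsum k X ≤ esum m := by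
  rw [qsum_eq]
  exact ⟨sum_two_pow_nonneg _,
    Finset.sum_le_sum_of_subset_of_nonneg (weven_sub hX) (by intros; positivity)⟩

private lemma psum_bounds {k m : ℕ} {X : Finset ℕ} (hX : X ⊆ range (k+m)) :
    0 ≤ psum k X ∧ psum k X ≤ osum m := by
  rw [psum_eq]
  exact ⟨sum_two_pow_nonneg _,
    Finset.sum_le_sum_of_subset_of_nonneg (wodd_sub hX) (by intros; positivity)⟩

private lemma she_eq_image (k : ℕ) (X : Finset ℕ) : she k X = (weven k X).image (· + k) := by
  ext a
  simp only [weven, Finset.mem_image]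
  constructor
  · intro ha
    have hmf := Finset.mem_filter.mp ha
    exact ⟨a - k, ⟨a, ha, rfl⟩, by omega⟩
  · rintro ⟨j, ⟨i, hi, rfl⟩, rfl⟩
    have hmf := Finset.mem_filter.mp hi
    have h2 : i - k + k = i := by omega
    rw [h2]
    exact hi

private lemma sho_eq_image (k : ℕ) (X : Finset ℕ) : sho k X = (wodd k X).image (· + k) := by
  ext a
  simp only [wodd, Finset.mem_image]
  constructor
  · intro ha
    have hmf := Finset.mem_filter.mp ha
    exact ⟨a - k, ⟨a, ha, rfl⟩, by omega⟩
  · rintro ⟨j, ⟨i, hi, rfl⟩, rfl⟩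
    have hmf := Finset.mem_filter.mp hi
    have h2 : i - k + k = i := by omega
    rw [h2]
    exact hi

private lemma core (k m N : ℕ) (hN : N = 2^(k+m) + 2^k + 1) (h3 : 3 ∣ 2^m + 1)
    (S S' : Finset ℕ) (hS : S ⊆ range (k+m)) (hS' : S' ⊆ range (k+m))
    (hdvd : (N:ℤ) ∣ (∑ i ∈ S, (selt N k m i : ℤ)) - ∑ i ∈ S', (selt N k m i : ℤ)) :
    S = S' := by
  have hA := stepA k m N hN h3 S hS
  have hA' := stepA k m N hN h3 S' hS'
  have hNZ : (N:ℤ) = 2^(k+m) + 2^k + 1 := by exact_mod_cast congrArg (Nat.cast : ℕ → ℤ) hN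
  have hkm : (2:ℤ)^(k+m) = 2^k * 2^m := pow_add 2 k m
  have h2m : (0:ℤ) < 2^m := by positivity
  have h2k : (0:ℤ) < 2^k := by positivity
  obtain ⟨hu0, hu1⟩ := usum_bounds k S
  obtain ⟨hu0', hu1'⟩ := usum_bounds k S'
  obtain ⟨hq0, hq1⟩ := qsum_bounds (m := m) hS
  obtain ⟨hq0', hq1'⟩ := qsum_bounds (m := m) hS'
  obtain ⟨hp0, hp1⟩ := psum_bounds (m := m) hS
  obtain ⟨hp0', hp1'⟩ := psum_bounds (m := m) hS'
  have hEO := eo_sum m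
  -- N divides the difference of the P-values
  have hdvdP : (N:ℤ) ∣ ((2^m+1) * usum k S + psum k S - qsum k S)
      - ((2^m+1) * usum k S' + psum k S' - qsum k S') := by
    have h1 : ((2^m+1 : ℤ) * usum k S + psum k S - qsum k S)
        - ((2^m+1) * usum k S' + psum k S' - qsum k S')
        = (3 * (∑ i ∈ S, (selt N k m i : ℤ)) - 3 * (∑ i ∈ S', (selt N k m i : ℤ)))
          - ((((she k S).card + (sho k S).card : ℤ))
             - (((she k S').card + (sho k S').card : ℤ))) * N := by
      rw [hA, hA']; ring
    rw [h1]
    apply dvd_sub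
    · have : 3 * (∑ i ∈ S, (selt N k m i : ℤ)) - 3 * (∑ i ∈ S', (selt N k m i : ℤ))
          = 3 * ((∑ i ∈ S, (selt N k m i : ℤ)) - ∑ i ∈ S', (selt N k m i : ℤ)) := by ring
      rw [this]
      exact hdvd.mul_left 3
    · exact Dvd.dvd.mul_left (dvd_refl ((N:ℕ):ℤ)) _
  -- the difference is small, hence zero
  have hzero : ((2^m+1 : ℤ) * usum k S + psum k S - qsum k S)
      = ((2^m+1) * usum k S' + psum k S' - qsum k S') := by
    obtain ⟨c, hc⟩ := hdvdP
    have hexp : ((2:ℤ)^m+1) * (2^k - 1) = 2^(k+m) + 2^k - 2^m - 1 := by rw [hkm]; ring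
    have hub : ((2^m+1 : ℤ) * usum k S + psum k S - qsum k S)
        - ((2^m+1) * usum k S' + psum k S' - qsum k S') ≤ (N:ℤ) - 3 := by
      have e1 : ((2:ℤ)^m+1) * usum k S ≤ (2^m+1) * (2^k - 1) :=
        mul_le_mul_of_nonneg_left hu1 (by linarith)
      have e2 : (0:ℤ) ≤ ((2:ℤ)^m+1) * usum k S' := mul_nonneg (by linarith) hu0'
      linarith
    have hlb : -((N:ℤ) - 3) ≤ ((2^m+1 : ℤ) * usum k S + psum k S - qsum k S)
        - ((2^m+1) * usum k S' + psum k S' - qsum k S') := by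
      have e1 : ((2:ℤ)^m+1) * usum k S' ≤ (2^m+1) * (2^k - 1) :=
        mul_le_mul_of_nonneg_left hu1' (by linarith)
      have e2 : (0:ℤ) ≤ ((2:ℤ)^m+1) * usum k S := mul_nonneg (by linarith) hu0
      linarith
    have hN3' : (3:ℤ) ≤ N := by
      rw [hNZ]
      have h1 : (0:ℤ) < 2^(k+m) := by positivity
      have h2 : (0:ℤ) < 2^k := by positivity
      linarith
    rcases lt_trichotomy c 0 with hc0 | hc0 | hc0
    · exfalso
      have hc1 : c ≤ -1 := by omega
      have h2 : (N:ℤ) * c ≤ N * (-1) := by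
        apply mul_le_mul_of_nonneg_left hc1 (by linarith)
      rw [hc] at hlb
      linarith
    · rw [hc0, mul_zero] at hc
      linarith [hc]
    · exfalso
      have hc1 : 1 ≤ c := by omega
      have h2 : (N:ℤ) * 1 ≤ N * c := by
        apply mul_le_mul_of_nonneg_left hc1 (by linarith)
      rw [hc] at hub
      linarith
  -- separate u and (p - q)
  have hum : usum k S = usum k S' := by
    have hring : ∀ a b : ℤ, ((2:ℤ)^m+1) * (a - b) = (2^m+1) * a - (2^m+1) * b := by
      intro a b; ring
    by_contra hne
    rcases lt_or_gt_of_ne hne with hlt | hlt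
    · have h1 : usum k S - usum k S' ≤ -1 := by omega
      have h2 : ((2:ℤ)^m+1) * (usum k S - usum k S') ≤ (2^m+1) * (-1) :=
        mul_le_mul_of_nonneg_left h1 (by linarith)
      rw [hring] at h2
      linarith
    · have h1 : (1:ℤ) ≤ usum k S - usum k S' := by omega
      have h2 : ((2:ℤ)^m+1) * 1 ≤ (2^m+1) * (usum k S - usum k S') :=
        mul_le_mul_of_nonneg_left h1 (by linarith)
      rw [hring] at h2
      linarith
  have hpq : psum k S - qsum k S = psum k S' - qsum k S' := by
    rw [hum] at hzero; linarith
  -- recover the even and odd high parts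
  have hsum_eq : ∑ j ∈ wodd k S ∪ weven k S', (2:ℤ)^j
      = ∑ j ∈ wodd k S' ∪ weven k S, (2:ℤ)^j := by
    have hd1 : Disjoint (wodd k S) (weven k S') := by
      rw [Finset.disjoint_left]
      intro j hj hj'
      have h1 := (Finset.mem_filter.mp (wodd_sub hS hj)).2
      have h2 := (Finset.mem_filter.mp (weven_sub hS' hj')).2
      omega
    have hd2 : Disjoint (wodd k S') (weven k S) := by
      rw [Finset.disjoint_left]
      intro j hj hj'
      have h1 := (Finset.mem_filter.mp (wodd_sub hS' hj)).2
      have h2 := (Finset.mem_filter.mp (weven_sub hS hj')).2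
      omega
    rw [Finset.sum_union hd1, Finset.sum_union hd2, ← psum_eq, ← psum_eq, ← qsum_eq, ← qsum_eq]
    linarith
  have hrm : ∀ (X : Finset ℕ), X ⊆ range (k+m) →
      wodd k X ∪ weven k X ⊆ range m := by
    intro X hX j hj
    rcases Finset.mem_union.mp hj with h | h
    · exact Finset.mem_of_mem_filter j (wodd_sub hX h)
    · exact Finset.mem_of_mem_filter j (weven_sub hX h)
  have hW : wodd k S ∪ weven k S' = wodd k S' ∪ weven k S := by
    apply two_pow_sum_inj m _ _ _ _ hsum_eq
    · intro j hj
      rcases Finset.mem_union.mp hj with h | h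
      · exact Finset.mem_of_mem_filter j (wodd_sub hS h)
      · exact Finset.mem_of_mem_filter j (weven_sub hS' h)
    · intro j hj
      rcases Finset.mem_union.mp hj with h | h
      · exact Finset.mem_of_mem_filter j (wodd_sub hS' h)
      · exact Finset.mem_of_mem_filter j (weven_sub hS h)
  have hwodd : wodd k S = wodd k S' := by
    ext j
    constructor
    · intro hj
      have hpar := (Finset.mem_filter.mp (wodd_sub hS hj)).2
      have : j ∈ wodd k S' ∪ weven k S := hW ▸ Finset.mem_union_left _ hj
      rcases Finset.mem_union.mp this with h | h
      · exact h
      · exact absurd (Finset.mem_filter.mp (weven_sub hS h)).2 (by omega)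
    · intro hj
      have hpar := (Finset.mem_filter.mp (wodd_sub hS' hj)).2
      have : j ∈ wodd k S ∪ weven k S' := hW.symm ▸ Finset.mem_union_left _ hj
      rcases Finset.mem_union.mp this with h | h
      · exact h
      · exact absurd (Finset.mem_filter.mp (weven_sub hS' h)).2 (by omega)
  have hweven : weven k S = weven k S' := by
    ext j
    constructor
    · intro hj
      have hpar := (Finset.mem_filter.mp (weven_sub hS hj)).2
      have : j ∈ wodd k S ∪ weven k S' := hW.symm ▸ Finset.mem_union_right _ hj
      rcases Finset.mem_union.mp this with h | h
      · exact absurd (Finset.mem_filter.mp (wodd_sub hS h)).2 (by omega)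
      · exact h
    · intro hj
      have hpar := (Finset.mem_filter.mp (weven_sub hS' hj)).2
      have : j ∈ wodd k S' ∪ weven k S := hW ▸ Finset.mem_union_right _ hj
      rcases Finset.mem_union.mp this with h | h
      · exact absurd (Finset.mem_filter.mp (wodd_sub hS' h)).2 (by omega)
      · exact h
  -- recover the three parts
  have hshe : she k S = she k S' := by rw [she_eq_image, she_eq_image, hweven]
  have hsho : sho k S = sho k S' := by rw [sho_eq_image, sho_eq_image, hwodd]
  have hslo : slo k S = slo k S' := by
    apply two_pow_sum_inj k
    · intro i hi; exact Finset.mem_range.mpr (Finset.mem_filter.mp hi).2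
    · intro i hi; exact Finset.mem_range.mpr (Finset.mem_filter.mp hi).2
    · exact hum
  ext i
  by_cases h1 : i < k
  · constructor
    · intro hi
      have : i ∈ slo k S := Finset.mem_filter.mpr ⟨hi, h1⟩
      exact (Finset.mem_filter.mp (hslo ▸ this)).1
    · intro hi
      have : i ∈ slo k S' := Finset.mem_filter.mpr ⟨hi, h1⟩
      exact (Finset.mem_filter.mp (hslo.symm ▸ this)).1
  · by_cases h2 : (i - k) % 2 = 0
    · constructor
      · intro hi
        have : i ∈ she k S := Finset.mem_filter.mpr ⟨hi, h1, h2⟩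
        exact (Finset.mem_filter.mp (hshe ▸ this)).1
      · intro hi
        have : i ∈ she k S' := Finset.mem_filter.mpr ⟨hi, h1, h2⟩
        exact (Finset.mem_filter.mp (hshe.symm ▸ this)).1
    · constructor
      · intro hi
        have : i ∈ sho k S := Finset.mem_filter.mpr ⟨hi, h1, h2⟩
        exact (Finset.mem_filter.mp (hsho ▸ this)).1
      · intro hi
        have : i ∈ sho k S' := Finset.mem_filter.mpr ⟨hi, h1, h2⟩
        exact (Finset.mem_filter.mp (hsho.symm ▸ this)).1

private lemma main_aux (k m N : ℕ) (hk : 1 ≤ k) (hm : 1 ≤ m)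
    (hN : N = 2^(k+m) + 2^k + 1) (h3 : 3 ∣ 2^m + 1) :
    ∃ A : Finset ℕ, (∀ a ∈ A, 0 < a) ∧ A.card = k + m ∧ SumsetDistinctMod N A ∧
      ∀ a ∈ A, (a : ℝ) ≤ (N : ℝ) / 3 + (N : ℝ) / 2 ^ k := by
  classical
  have h2k1 : 1 ≤ (2:ℕ)^k := Nat.one_le_two_pow
  have h2m1 : 1 ≤ (2:ℕ)^m := Nat.one_le_two_pow
  have h2km1 : 1 ≤ (2:ℕ)^(k+m) := Nat.one_le_two_pow
  have hinj : ∀ i ∈ range (k+m), ∀ j ∈ range (k+m), selt N k m i = selt N k m j → i = j := by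
    intro i hi j hj hij
    have h := core k m N hN h3 {i} {j}
      (Finset.singleton_subset_iff.mpr hi) (Finset.singleton_subset_iff.mpr hj)
      (by rw [Finset.sum_singleton, Finset.sum_singleton, hij, sub_self]; exact dvd_zero _)
    exact Finset.singleton_inj.mp h
  refine ⟨(range (k+m)).image (selt N k m), ?_, ?_, ?_, ?_⟩
  · -- positivity
    intro a ha
    obtain ⟨i, hi, rfl⟩ := Finset.mem_image.mp ha
    have him : i < k + m := Finset.mem_range.mp hi
    by_cases h1 : i < k
    · have he := selt_lo (N := N) h3 i h1
      have h2 : 2^m + 1 ≤ 2^i * (2^m+1) := Nat.le_mul_of_pos_left _ (by positivity)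
      omega
    · by_cases h2 : (i - k) % 2 = 0
      · obtain ⟨he, _⟩ := selt_he hN h3 i h1 him h2
        have hx : (2:ℕ)^(i-k) ≤ 2^(k+m-1) := Nat.pow_le_pow_right (by norm_num) (by omega)
        have hx2 : (2:ℕ)^(k+m-1) < 2^(k+m) := Nat.pow_lt_pow_right (by norm_num) (by omega)
        have h5 : 2^(k+m) ≤ N := by
          rw [hN]
          exact le_trans (Nat.le_add_right _ _) (Nat.le_add_right _ _)
        have hlt : 2^(i-k) < N := lt_of_le_of_lt hx (lt_of_lt_of_le hx2 h5)
        omega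
      · have he := selt_ho hN h3 i h1 him h2
        have hp1 : 1 ≤ (2:ℕ)^(i-k) := Nat.one_le_two_pow
        omega
  · -- card
    rw [Finset.card_image_of_injOn
      (fun i hi j hj h => hinj i (Finset.mem_coe.mp hi) j (Finset.mem_coe.mp hj) h)]
    exact Finset.card_range _
  · -- sumset distinct
    intro B hB C hC hmod
    set SB := (range (k+m)).filter (fun i => selt N k m i ∈ B) with hSB
    set SC := (range (k+m)).filter (fun i => selt N k m i ∈ C) with hSC
    have hBeq : B = SB.image (selt N k m) := by
      ext b
      constructor
      · intro hb
        obtain ⟨i, hi, rfl⟩ := Finset.mem_image.mp (hB hb)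
        exact Finset.mem_image.mpr ⟨i, Finset.mem_filter.mpr ⟨hi, hb⟩, rfl⟩
      · intro hb
        obtain ⟨i, hi, rfl⟩ := Finset.mem_image.mp hb
        exact (Finset.mem_filter.mp hi).2
    have hCeq : C = SC.image (selt N k m) := by
      ext b
      constructor
      · intro hb
        obtain ⟨i, hi, rfl⟩ := Finset.mem_image.mp (hC hb)
        exact Finset.mem_image.mpr ⟨i, Finset.mem_filter.mpr ⟨hi, hb⟩, rfl⟩
      · intro hb
        obtain ⟨i, hi, rfl⟩ := Finset.mem_image.mp hb
        exact (Finset.mem_filter.mp hi).2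
    have hsumB : ∑ x ∈ B, x = ∑ i ∈ SB, selt N k m i := by
      rw [hBeq]
      apply Finset.sum_image
      intro i hi j hj h
      exact hinj i (Finset.mem_filter.mp hi).1 j (Finset.mem_filter.mp hj).1 h
    have hsumC : ∑ x ∈ C, x = ∑ i ∈ SC, selt N k m i := by
      rw [hCeq]
      apply Finset.sum_image
      intro i hi j hj h
      exact hinj i (Finset.mem_filter.mp hi).1 j (Finset.mem_filter.mp hj).1 h
    have hme : (∑ i ∈ SB, selt N k m i) ≡ (∑ i ∈ SC, selt N k m i) [MOD N] := by
      rw [← hsumB, ← hsumC]; exact hmod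
    have hdvd : (N:ℤ) ∣ (∑ i ∈ SB, (selt N k m i : ℤ)) - ∑ i ∈ SC, (selt N k m i : ℤ) := by
      have h2 := hme.dvd
      have h4 : (N:ℤ) ∣ -((∑ i ∈ SC, selt N k m i : ℕ) - ((∑ i ∈ SB, selt N k m i : ℕ)) : ℤ) :=
        dvd_neg.mpr h2
      rw [neg_sub] at h4
      push_cast at h4
      exact h4
    have hScore := core k m N hN h3 SB SC
      (Finset.filter_subset _ _) (Finset.filter_subset _ _) hdvd
    rw [hBeq, hCeq, hScore]
  · -- bound
    intro a ha
    obtain ⟨i, hi, rfl⟩ := Finset.mem_image.mp ha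
    have him : i < k + m := Finset.mem_range.mp hi
    have hNR : (0:ℝ) ≤ (N:ℝ)/2^k := by positivity
    have hdiv3 : ∀ x : ℕ, 3 * x ≤ N → (x:ℝ) ≤ (N:ℝ)/3 + (N:ℝ)/2^k := by
      intro x hx
      have hxr : (3:ℝ) * x ≤ N := by exact_mod_cast hx
      have : (x:ℝ) ≤ (N:ℝ)/3 := by linarith
      linarith
    by_cases h1 : i < k
    · apply hdiv3
      have he := selt_lo (N := N) h3 i h1
      have e1 : (2:ℕ)^i * (2^m+1) = 2^(i+m) + 2^i := by rw [pow_add]; ring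
      have e2 : (2:ℕ)^(i+m) ≤ 2^(k+m) := Nat.pow_le_pow_right (by norm_num) (by omega)
      have e3 : (2:ℕ)^i ≤ 2^k := Nat.pow_le_pow_right (by norm_num) (by omega)
      omega
    · by_cases h2 : (i - k) % 2 = 0
      · apply hdiv3
        obtain ⟨he, hle⟩ := selt_he hN h3 i h1 him h2
        have hp1 : 1 ≤ (2:ℕ)^(i-k) := Nat.one_le_two_pow
        omega
      · have he := selt_ho hN h3 i h1 him h2
        have hik : (2:ℕ)^(i-k) * 2^k = 2^i := by
          rw [← pow_add]
          congr 1
          omega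
        have hle2 : (2:ℕ)^(i-k) * 2^k ≤ N := by
          rw [hik]
          have : (2:ℕ)^i ≤ 2^(k+m) := Nat.pow_le_pow_right (by norm_num) (by omega)
          omega
        have hc : (3:ℝ) * (selt N k m i : ℝ) = (N:ℝ) + 2^(i-k) := by exact_mod_cast congrArg (Nat.cast : ℕ → ℝ) he
        have h2kR : (0:ℝ) < 2^k := by positivity
        rw [div_add_div _ _ (by norm_num : (3:ℝ) ≠ 0) (ne_of_gt h2kR),
          le_div_iff₀ (by positivity)]
        have hstep : ((selt N k m i : ℕ) : ℝ) * (3 * 2^k) = ((N:ℝ) + 2^(i-k)) * 2^k := by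
          rw [← hc]; ring
        rw [hstep]
        have hle2R : ((2:ℝ)^(i-k)) * 2^k ≤ N := by exact_mod_cast hle2
        have hN0 : (0:ℝ) ≤ N := by positivity
        have hexp : ((N:ℝ) + 2^(i-k)) * 2^k = (N:ℝ) * 2^k + 2^(i-k) * 2^k := by ring
        rw [hexp]
        linarith

theorem stmt1 (k n : ℕ) (hk : 1 ≤ k) (hkn : k < n) (N : ℕ) (hN : N = 2 ^ n + 2 ^ k + 1)
    (h3 : 3 ∣ 2 ^ (n - k) + 1) :
    ∃ A : Finset ℕ, (∀ a ∈ A, 0 < a) ∧ A.card = n ∧ SumsetDistinctMod N A ∧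
      ∀ a ∈ A, (a : ℝ) ≤ (N : ℝ) / 3 + (N : ℝ) / 2 ^ k := by
  obtain ⟨A, h1, h2, h3', h4⟩ := main_aux k (n-k) N hk (by omega)
    (by rw [hN, show k + (n-k) = n from by omega]) h3
  exact ⟨A, h1, by omega, h3', h4⟩
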